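/- If ∇ ⊢ t₁ ≈ t₂ and ∇ ⊢ t₂ ≈ π • t₂, then ∇ ⊢ t₁ ≈ π • t₂. -/

import Mathlib

abbrev Atom := ℕ
abbrev Var := ℕ
abbrev Perm := List (Atom × Atom)

def swap (p : Atom × Atom) (a : Atom) : Atom :=
  if a = p.1 then p.2 else if a = p.2 then p.1 else a

def permAtom : Perm → Atom → Atom
  | [], a => a
  | p :: π, a => swap p (permAtom π a)

def ds (π π' : Perm) : Set Atom := {a | permAtom π a ≠ permAtom π' a}

inductive Trm : Type
  | unit : Trm
  | pair : Trm → Trm → Trm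
  | fn : ℕ → Trm → Trm
  | atom : Atom → Trm
  | abs : Atom → Trm → Trm
  | susp : Perm → Var → Trm

def permTrm (π : Perm) : Trm → Trm
  | .unit => .unit
  | .pair t₁ t₂ => .pair (permTrm π t₁) (permTrm π t₂)
  | .fn f t => .fn f (permTrm π t)
  | .atom a => .atom (permAtom π a)
  | .abs a t => .abs (permAtom π a) (permTrm π t)
  | .susp π' X => .susp (π ++ π') X

abbrev Env := Set (Atom × Var)

inductive fresh (Γ : Env) (a : Atom) : Trm → Prop
  | unit : fresh Γ a .unit
  | pair {t₁ t₂} : fresh Γ a t₁ → fresh Γ a t₂ → fresh Γ a (.pair t₁ t₂)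
  | fn {f t} : fresh Γ a t → fresh Γ a (.fn f t)
  | abs₁ {t} : fresh Γ a (.abs a t)
  | abs₂ {b t} : a ≠ b → fresh Γ a t → fresh Γ a (.abs b t)
  | atom {b} : a ≠ b → fresh Γ a (.atom b)
  | susp {π X} : (permAtom π.reverse a, X) ∈ Γ → fresh Γ a (.susp π X)

inductive equ (Γ : Env) : Trm → Trm → Prop
  | unit : equ Γ .unit .unit
  | pair {t₁ t₂ s₁ s₂} : equ Γ t₁ t₂ → equ Γ s₁ s₂ → equ Γ (.pair t₁ s₁) (.pair t₂ s₂)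
  | fn {f t₁ t₂} : equ Γ t₁ t₂ → equ Γ (.fn f t₁) (.fn f t₂)
  | abs₁ {a t₁ t₂} : equ Γ t₁ t₂ → equ Γ (.abs a t₁) (.abs a t₂)
  | abs₂ {a b t₁ t₂} : a ≠ b → fresh Γ a t₂ → equ Γ t₁ (permTrm [(a, b)] t₂) →
      equ Γ (.abs a t₁) (.abs b t₂)
  | atom {a} : equ Γ (.atom a) (.atom a)
  | susp {π π' X} : (∀ c ∈ ds π π', (c, X) ∈ Γ) → equ Γ (.susp π X) (.susp π' X)

inductive weak : Trm → Trm → Prop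
  | unit : weak .unit .unit
  | atom {a} : weak (.atom a) (.atom a)
  | fn {f t t'} : weak t t' → weak (.fn f t) (.fn f t')
  | pair {t₁ t₂ s₁ s₂} : weak t₁ s₁ → weak t₂ s₂ → weak (.pair t₁ t₂) (.pair s₁ s₂)
  | abs {a t t'} : weak t t' → weak (.abs a t) (.abs a t')
  | susp {π π' X} : ds π π' = ∅ → weak (.susp π X) (.susp π' X)

def subst (σ : Var → Option Trm) : Trm → Trm
  | .unit => .unit
  | .pair t₁ t₂ => .pair (subst σ t₁) (subst σ t₂)
  | .fn f t => .fn f (subst σ t)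
  | .atom a => .atom a
  | .abs a t => .abs a (subst σ t)
  | .susp π X =>
      match σ X with
      | some t => permTrm π t
      | none => .susp π X

section Lemmas

lemma swap_swap (p : Atom × Atom) (a : Atom) : swap p (swap p a) = a := by
  rcases p with ⟨x, y⟩
  simp only [swap]
  split_ifs <;> simp_all

lemma permAtom_append (π π' : Perm) (a : Atom) :
    permAtom (π ++ π') a = permAtom π (permAtom π' a) := by
  induction π with
  | nil => rfl
  | cons p π ih => simp [permAtom, ih]

lemma permAtom_rev_left (π : Perm) (a : Atom) :
    permAtom π.reverse (permAtom π a) = a := by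
  induction π generalizing a with
  | nil => rfl
  | cons p π ih =>
    rw [List.reverse_cons, show permAtom (p :: π) a = swap p (permAtom π a) from rfl,
      permAtom_append, show permAtom [p] (swap p (permAtom π a)) = swap p (swap p (permAtom π a)) from rfl,
      swap_swap, ih]

lemma permAtom_rev_right (π : Perm) (a : Atom) :
    permAtom π (permAtom π.reverse a) = a := by
  induction π generalizing a with
  | nil => rfl
  | cons p π ih =>
    rw [show permAtom (p :: π) (permAtom (p :: π).reverse a)
        = swap p (permAtom π (permAtom (p :: π).reverse a)) from rfl,
      List.reverse_cons, permAtom_append,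
      show permAtom [p] a = swap p a from rfl, ih, swap_swap]

lemma permAtom_inj (π : Perm) {a b : Atom} (h : permAtom π a = permAtom π b) : a = b := by
  have := congrArg (permAtom π.reverse) h
  rwa [permAtom_rev_left, permAtom_rev_left] at this

lemma permAtom_rev_agree {π π' : Perm} (h : ∀ a, permAtom π a = permAtom π' a) (a : Atom) :
    permAtom π.reverse a = permAtom π'.reverse a := by
  apply permAtom_inj π
  rw [permAtom_rev_right, h, permAtom_rev_right]

lemma permTrm_permTrm (π π' : Perm) (t : Trm) :
    permTrm π (permTrm π' t) = permTrm (π ++ π') t := by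
  induction t <;> simp [permTrm, permAtom_append, *]

lemma permTrm_nil (t : Trm) : permTrm [] t = t := by
  induction t <;> simp [permTrm, permAtom, *]

lemma swap_permAtom (π : Perm) (a b c : Atom) :
    permAtom π (swap (a, b) c) = swap (permAtom π a, permAtom π b) (permAtom π c) := by
  by_cases h1 : c = a
  · subst h1; simp [swap]
  · by_cases h2 : c = b
    · subst h2
      have e1 : permAtom π c ≠ permAtom π a := fun e => h1 (permAtom_inj π e)
      simp [swap, h1, e1]
    · have e1 : permAtom π c ≠ permAtom π a := fun e => h1 (permAtom_inj π e)
      have e2 : permAtom π c ≠ permAtom π b := fun e => h2 (permAtom_inj π e)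
      simp [swap, h1, h2, e1, e2]

def Trm.size : Trm → ℕ
  | .unit => 1
  | .pair t₁ t₂ => t₁.size + t₂.size + 1
  | .fn _ t => t.size + 1
  | .atom _ => 1
  | .abs _ t => t.size + 1
  | .susp _ _ => 1

lemma Trm.size_pos (t : Trm) : 0 < t.size := by cases t <;> simp [Trm.size]

lemma size_permTrm (π : Perm) (t : Trm) : (permTrm π t).size = t.size := by
  induction t <;> simp [permTrm, Trm.size, *]

lemma weak_agree {π π' : Perm} (h : ∀ a, permAtom π a = permAtom π' a) (t : Trm) :
    weak (permTrm π t) (permTrm π' t) := by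
  induction t with
  | unit => exact .unit
  | pair t₁ t₂ ih1 ih2 => exact .pair ih1 ih2
  | fn f t ih => exact .fn ih
  | atom a => rw [show permTrm π (.atom a) = .atom (permAtom π a) from rfl,
      show permTrm π' (.atom a) = .atom (permAtom π' a) from rfl, h a]; exact .atom
  | abs a t ih =>
    show weak (.abs (permAtom π a) (permTrm π t)) (.abs (permAtom π' a) (permTrm π' t))
    rw [h a]; exact .abs ih
  | susp ρ X =>
    refine .susp ?_
    ext c
    simp only [ds, Set.mem_setOf_eq, Set.mem_empty_iff_false, iff_false, not_not]
    rw [permAtom_append, permAtom_append, h]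

lemma weak_permTrm {t t' : Trm} (ρ : Perm) (h : weak t t') : weak (permTrm ρ t) (permTrm ρ t') := by
  induction h with
  | unit => exact .unit
  | atom => exact .atom
  | fn _ ih => exact .fn ih
  | pair _ _ ih1 ih2 => exact .pair ih1 ih2
  | abs _ ih => exact .abs ih
  | @susp π π' X hds =>
    refine .susp ?_
    have hag : ∀ a, permAtom π a = permAtom π' a := by
      intro a; by_contra hne
      exact absurd hds (by intro h; exact (h ▸ (Set.mem_setOf_eq ▸ hne : a ∈ ds π π') : a ∈ (∅ : Set Atom)))
    ext c
    simp only [ds, Set.mem_setOf_eq, Set.mem_empty_iff_false, iff_false, not_not]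
    rw [permAtom_append, permAtom_append, hag]

lemma fresh_weak {Γ : Env} {a : Atom} {t t' : Trm} (h : fresh Γ a t) (w : weak t t') :
    fresh Γ a t' := by
  induction w with
  | unit => exact h
  | atom => exact h
  | fn _ ih => cases h with | fn hf => exact .fn (ih hf)
  | pair _ _ ih1 ih2 => cases h with | pair h1 h2 => exact .pair (ih1 h1) (ih2 h2)
  | abs _ ih =>
    cases h with
    | abs₁ => exact .abs₁
    | abs₂ hne hf => exact .abs₂ hne (ih hf)
  | @susp π π' X hds =>
    cases h with
    | susp hm =>
      have hag : ∀ x, permAtom π x = permAtom π' x := by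
        intro x; by_contra hne
        exact (hds ▸ (Set.mem_setOf_eq ▸ hne : x ∈ ds π π') : x ∈ (∅ : Set Atom))
      exact .susp (by rw [← permAtom_rev_agree hag]; exact hm)

lemma equ_weak {Γ : Env} {t s s' : Trm} (h : equ Γ t s) (w : weak s s') : equ Γ t s' := by
  induction h generalizing s' with
  | unit => cases w; exact .unit
  | atom => cases w; exact .atom
  | pair _ _ ih1 ih2 => cases w with | pair w1 w2 => exact .pair (ih1 w1) (ih2 w2)
  | fn _ ih => cases w with | fn w1 => exact .fn (ih w1)
  | abs₁ _ ih => cases w with | abs w1 => exact .abs₁ (ih w1)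
  | abs₂ hne hf _ ih =>
    cases w with
    | abs w1 => exact .abs₂ hne (fresh_weak hf w1) (ih (weak_permTrm _ w1))
  | @susp π π' X hc =>
    cases w with
    | @susp _ π'' _ hds =>
      refine .susp fun c hmem => hc c ?_
      have hag : ∀ x, permAtom π' x = permAtom π'' x := by
        intro x; by_contra hne
        exact (hds ▸ (Set.mem_setOf_eq ▸ hne : x ∈ ds π' π'') : x ∈ (∅ : Set Atom))
      simp only [ds, Set.mem_setOf_eq] at hmem ⊢
      rw [hag]; exact hmem

lemma fresh_permTrm {Γ : Env} {a : Atom} {t : Trm} (π : Perm) (h : fresh Γ a t) :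
    fresh Γ (permAtom π a) (permTrm π t) := by
  induction h with
  | unit => exact .unit
  | pair _ _ ih1 ih2 => exact .pair ih1 ih2
  | fn _ ih => exact .fn ih
  | abs₁ => exact .abs₁
  | abs₂ hne _ ih => exact .abs₂ (fun e => hne (permAtom_inj π e)) ih
  | atom hne => exact .atom (fun e => hne (permAtom_inj π e))
  | @susp π' X hm =>
    refine .susp ?_
    rw [show (π ++ π').reverse = π'.reverse ++ π.reverse from List.reverse_append,
      permAtom_append, permAtom_rev_left]
    exact hm

lemma fresh_permTrm_rev {Γ : Env} {a : Atom} {t : Trm} (π : Perm)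
    (h : fresh Γ (permAtom π a) (permTrm π t)) : fresh Γ a t := by
  have h2 := fresh_permTrm π.reverse h
  rw [permAtom_rev_left, permTrm_permTrm] at h2
  have hw : weak (permTrm (π.reverse ++ π) t) t := by
    have := weak_agree (π := π.reverse ++ π) (π' := [])
      (fun x => by rw [permAtom_append, permAtom_rev_left]; rfl) t
    rwa [permTrm_nil] at this
  exact fresh_weak h2 hw

lemma fresh_equ {Γ : Env} {t s : Trm} (h : equ Γ t s) : ∀ a, fresh Γ a t → fresh Γ a s := by
  induction h with
  | unit => exact fun a hf => hf
  | atom => exact fun a hf => hf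
  | pair _ _ ih1 ih2 =>
    intro a hf; cases hf with | pair h1 h2 => exact .pair (ih1 a h1) (ih2 a h2)
  | fn _ ih => intro a hf; cases hf with | fn h1 => exact .fn (ih a h1)
  | abs₁ _ ih =>
    intro c hf
    cases hf with
    | abs₁ => exact .abs₁
    | abs₂ hne h1 => exact .abs₂ hne (ih c h1)
  | @abs₂ a b t₁ t₂ hne hf _ ih =>
    intro c hfc
    cases hfc with
    | abs₁ => exact .abs₂ hne hf
    | abs₂ hca h1 =>
      by_cases hcb : c = b
      · subst hcb; exact .abs₁
      · have h2 : fresh Γ c (permTrm [(a, b)] t₂) := ih c h1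
        have hfix : permAtom [(a, b)] c = c := by
          show swap (a, b) c = c
          simp [swap, hca, hcb]
        refine .abs₂ hcb (fresh_permTrm_rev [(a, b)] ?_)
        rwa [hfix]
  | @susp π π' X hc =>
    intro a hf
    cases hf with
    | susp hm =>
      by_cases heq : permAtom π'.reverse a = permAtom π.reverse a
      · exact .susp (heq ▸ hm)
      · refine .susp (hc _ ?_)
        simp only [ds, Set.mem_setOf_eq]
        rw [permAtom_rev_right]
        intro he
        apply heq
        have h3 := congrArg (permAtom π.reverse) he
        rwa [permAtom_rev_left] at h3

lemma equ_permTrm {Γ : Env} {t s : Trm} (π : Perm) (h : equ Γ t s) :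
    equ Γ (permTrm π t) (permTrm π s) := by
  induction h with
  | unit => exact .unit
  | atom => exact .atom
  | pair _ _ ih1 ih2 => exact .pair ih1 ih2
  | fn _ ih => exact .fn ih
  | abs₁ _ ih => exact .abs₁ ih
  | @abs₂ a b t₁ t₂ hne hf _ ih =>
    refine .abs₂ (fun e => hne (permAtom_inj π e)) (fresh_permTrm π hf) ?_
    have h1 : equ Γ (permTrm π t₁) (permTrm (π ++ [(a, b)]) t₂) := by
      rw [← permTrm_permTrm]; exact ih
    have hag : ∀ c, permAtom (π ++ [(a, b)]) c
        = permAtom ((permAtom π a, permAtom π b) :: π) c := by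
      intro c
      rw [permAtom_append]
      show permAtom π (swap (a, b) (permAtom [] c)) = swap (permAtom π a, permAtom π b) (permAtom π c)
      exact swap_permAtom π a b c
    have hw := weak_agree hag t₂
    have h2 := equ_weak h1 hw
    rwa [show ((permAtom π a, permAtom π b) :: π : Perm)
        = [(permAtom π a, permAtom π b)] ++ π from rfl, ← permTrm_permTrm] at h2
  | @susp ρ ρ' X hc =>
    refine .susp fun c hmem => hc c ?_
    simp only [ds, Set.mem_setOf_eq, permAtom_append] at hmem ⊢
    intro he; exact hmem (by rw [he])

lemma equ_perm_perm {Γ : Env} : ∀ (t : Trm) (π π' : Perm),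
    (∀ a ∈ ds π π', fresh Γ a t) → equ Γ (permTrm π t) (permTrm π' t) := by
  intro t
  induction t with
  | unit => intro _ _ _; exact .unit
  | pair t₁ t₂ ih1 ih2 =>
    intro π π' hf
    exact .pair (ih1 π π' fun a ha => by cases hf a ha with | pair h1 _ => exact h1)
      (ih2 π π' fun a ha => by cases hf a ha with | pair _ h2 => exact h2)
  | fn f t ih =>
    intro π π' hf
    exact .fn (ih π π' fun a ha => by cases hf a ha with | fn h1 => exact h1)
  | atom a =>
    intro π π' hf
    show equ Γ (.atom (permAtom π a)) (.atom (permAtom π' a))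
    by_cases heq : permAtom π a = permAtom π' a
    · rw [heq]; exact .atom
    · cases hf a heq with | atom hne => exact absurd rfl hne
  | susp ρ X =>
    intro π π' hf
    refine .susp fun c hmem => ?_
    simp only [ds, Set.mem_setOf_eq, permAtom_append] at hmem
    have hds : permAtom ρ c ∈ ds π π' := hmem
    have := hf _ hds
    cases this with
    | susp hm => rwa [permAtom_rev_left] at hm
  | abs a t ih =>
    intro π π' hf
    show equ Γ (.abs (permAtom π a) (permTrm π t)) (.abs (permAtom π' a) (permTrm π' t))
    by_cases heq : permAtom π a = permAtom π' a
    · rw [heq]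
      refine .abs₁ (ih π π' fun c hc => ?_)
      have hca : c ≠ a := fun e => (e ▸ hc : a ∈ ds π π') heq
      cases hf c hc with
      | abs₁ => exact absurd rfl hca
      | abs₂ _ h1 => exact h1
    · refine .abs₂ heq ?_ ?_
      · -- fresh Γ (permAtom π a) (permTrm π' t)
        obtain ⟨d, hd⟩ : ∃ d, permAtom π'.reverse (permAtom π a) = d := ⟨_, rfl⟩
        have hpd : permAtom π' d = permAtom π a := by rw [← hd, permAtom_rev_right]
        have hda : d ≠ a := fun e => heq (by rw [← hpd, e])
        have hdds : d ∈ ds π π' := by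
          simp only [ds, Set.mem_setOf_eq]
          rw [hpd]
          intro he
          exact hda (permAtom_inj π he)
        have hft : fresh Γ d t := by
          cases hf d hdds with
          | abs₁ => exact absurd rfl hda
          | abs₂ _ h1 => exact h1
        have := fresh_permTrm π' hft
        rwa [hpd] at this
      · -- equ Γ (permTrm π t) (permTrm [(permAtom π a, permAtom π' a)] (permTrm π' t))
        have hcond : ∀ c ∈ ds π ((permAtom π a, permAtom π' a) :: π'), fresh Γ c t := by
          intro c hc
          simp only [ds, Set.mem_setOf_eq] at hc
          have hca : c ≠ a := by
            intro e; subst e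
            apply hc
            show permAtom π c = swap (permAtom π c, permAtom π' c) (permAtom π' c)
            by_cases hba : permAtom π' c = permAtom π c
            · simp [swap, hba]
            · simp [swap, hba]
          have hcds : c ∈ ds π π' := by
            simp only [ds, Set.mem_setOf_eq]
            intro he
            apply hc
            show permAtom π c = swap (permAtom π a, permAtom π' a) (permAtom π' c)
            have h1 : permAtom π' c ≠ permAtom π a := by
              rw [← he]; exact fun e => hca (permAtom_inj π e)
            have h2 : permAtom π' c ≠ permAtom π' a := fun e => hca (permAtom_inj π' e)
            simp [swap, h1, h2, he]
          cases hf c hcds with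
          | abs₁ => exact absurd rfl hca
          | abs₂ _ h1 => exact h1
        have := ih π ((permAtom π a, permAtom π' a) :: π') hcond
        rwa [show ((permAtom π a, permAtom π' a) :: π' : Perm)
          = [(permAtom π a, permAtom π' a)] ++ π' from rfl, ← permTrm_permTrm] at this

lemma size_equ {Γ : Env} {t s : Trm} (h : equ Γ t s) : t.size = s.size := by
  induction h with
  | unit => rfl
  | atom => rfl
  | pair _ _ ih1 ih2 => simp [Trm.size, ih1, ih2]
  | fn _ ih => simp [Trm.size, ih]
  | abs₁ _ ih => simp [Trm.size, ih]
  | abs₂ _ _ _ ih => simp [Trm.size, ih, size_permTrm]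
  | susp _ => rfl

lemma equ_trans_aux {Γ : Env} : ∀ n {t₁ t₂ t₃ : Trm}, t₂.size ≤ n →
    equ Γ t₁ t₂ → equ Γ t₂ t₃ → equ Γ t₁ t₃ := by
  intro n
  induction n with
  | zero => intro t₁ t₂ t₃ hn _ _; exact absurd hn (by have := t₂.size_pos; omega)
  | succ n ih =>
    intro t₁ t₂ t₃ hn h1 h2
    cases h1 with
    | unit => exact h2
    | atom => exact h2
    | @pair _ v₂ _ w₂ ha hb =>
      cases h2 with
      | pair hc hd =>
        simp only [Trm.size] at hn
        have p1 := Trm.size_pos v₂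
        have p2 := Trm.size_pos w₂
        refine .pair (ih ?_ ha hc) (ih ?_ hb hd) <;> omega
    | fn hf =>
      cases h2 with
      | fn hg =>
        simp only [Trm.size] at hn
        refine .fn (ih ?_ hf hg)
        omega
    | @susp π π' X hc =>
      cases h2 with
      | @susp _ π'' _ hc' =>
        refine .susp fun c hmem => ?_
        simp only [ds, Set.mem_setOf_eq] at hmem
        by_cases he : permAtom π c = permAtom π' c
        · exact hc' c (by simp only [ds, Set.mem_setOf_eq]; rw [← he]; exact hmem)
        · exact hc c he
    | @abs₁ a u₁ u₂ hu =>
      simp only [Trm.size] at hn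
      cases h2 with
      | abs₁ hv => refine .abs₁ (ih ?_ hu hv); omega
      | abs₂ hne hf hv => refine .abs₂ hne hf (ih ?_ hu hv); omega
    | @abs₂ a b u₁ u₂ hne hf hu =>
      simp only [Trm.size] at hn
      cases h2 with
      | @abs₁ _ _ u₃ hv =>
        refine .abs₂ hne (fresh_equ hv a hf) (ih ?_ hu (equ_permTrm [(a, b)] hv))
        rw [size_permTrm]; omega
      | @abs₂ _ c _ u₃ hne' hf' hv =>
        have hsz23 : u₂.size = u₃.size := by
          have := size_equ hv; rwa [size_permTrm] at this
        by_cases hac : a = c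
        · subst hac
          refine .abs₁ ?_
          have e1 : equ Γ (permTrm [(a, b)] u₂) (permTrm ([(a, b)] ++ [(b, a)]) u₃) := by
            rw [← permTrm_permTrm]; exact equ_permTrm [(a, b)] hv
          have hw : weak (permTrm ([(a, b)] ++ [(b, a)]) u₃) u₃ := by
            have hag : ∀ x, permAtom ([(a, b)] ++ [(b, a)] : Perm) x = permAtom [] x := by
              intro x
              show swap (a, b) (swap (b, a) x) = x
              simp only [swap]
              split_ifs <;> simp_all
            have := weak_agree hag u₃
            rwa [permTrm_nil] at this
          have e2 := equ_weak e1 hw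
          refine ih ?_ hu e2
          rw [size_permTrm]; omega
        · have hab : a ≠ b := hne
          have hfa3 : fresh Γ a u₃ := by
            have f1 : fresh Γ a (permTrm [(b, c)] u₃) := fresh_equ hv a hf
            have hfix : permAtom [(b, c)] a = a := by
              show swap (b, c) a = a
              simp [swap, hab, hac]
            exact fresh_permTrm_rev [(b, c)] (by rwa [hfix])
          refine .abs₂ hac hfa3 ?_
          have e1 : equ Γ (permTrm [(a, b)] u₂) (permTrm ([(a, b)] ++ [(b, c)]) u₃) := by
            rw [← permTrm_permTrm]; exact equ_permTrm [(a, b)] hv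
          have e2 : equ Γ (permTrm ([(a, b)] ++ [(b, c)]) u₃) (permTrm [(a, c)] u₃) := by
            refine equ_perm_perm u₃ _ _ fun d hd => ?_
            simp only [ds, Set.mem_setOf_eq] at hd
            by_cases hda : d = a
            · exact hda ▸ hfa3
            · by_cases hdb : d = b
              · exact hdb ▸ hf'
              · exfalso
                apply hd
                show swap (a, b) (swap (b, c) d) = swap (a, c) d
                simp only [swap]
                split_ifs <;> simp_all
          have m1 : equ Γ u₁ (permTrm ([(a, b)] ++ [(b, c)]) u₃) := by
            refine ih ?_ hu e1
            rw [size_permTrm]; omega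
          refine ih ?_ m1 e2
          rw [size_permTrm]
          omega

theorem equ_trans_perm (Γ : Env) (t₁ t₂ : Trm) (π : Perm)
    (h₁ : equ Γ t₁ t₂) (h₂ : equ Γ t₂ (permTrm π t₂)) :
    equ Γ t₁ (permTrm π t₂) := by
  have hsz : t₂.size ≤ t₂.size := le_refl _
  exact equ_trans_aux t₂.size hsz h₁ h₂
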